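/- Let A ⊂ ℝ² be a measurable set of finite measure and let A* = B_s be the disk centered at the origin with |B_s| = |A|. Then ∫_A |x|² dx − ∫_{A*} |x|² dx ≥ (1/(4π)) ‖1_A − 1_{A*}‖_{L¹}² , i.e. the excess angular impulse of A over its symmetric rearrangement controls the square of the L¹ distance between the indicator functions. -/

import Mathlib

open MeasureTheory

noncomputable abbrev E2 : Type := EuclideanSpace ℝ (Fin 2)

lemma vol_ball2 (r : ℝ) (hr : 0 ≤ r) :
    volume (Metric.ball (0 : E2) r) = ENNReal.ofReal (Real.pi * r ^ 2) := by
  rw [EuclideanSpace.volume_ball]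
  simp only [Fintype.card_fin]
  rw [show ((2:ℕ) : ℝ) / 2 + 1 = 2 by norm_num, Real.Gamma_two,
    Real.sq_sqrt Real.pi_nonneg, div_one, ← ENNReal.ofReal_pow hr,
    ← ENNReal.ofReal_mul (by positivity), mul_comm]

lemma vol_closedBall2 (r : ℝ) (hr : 0 ≤ r) :
    volume (Metric.closedBall (0 : E2) r) = ENNReal.ofReal (Real.pi * r ^ 2) := by
  rw [MeasureTheory.Measure.addHaar_closedBall_eq_addHaar_ball, vol_ball2 r hr]

lemma layer_bound (S : Set E2) (hS : MeasurableSet S)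
    (f : E2 → ℝ) (hfm : Measurable f) (hfi : IntegrableOn f S)
    (hnn : ∀ x ∈ S, 0 ≤ f x) (c : ℝ) (hc : 0 ≤ c)
    (hπc : Real.pi * c ≤ (volume S).toReal)
    (hmeas : ∀ t ∈ Set.Ioc (0:ℝ) c,
      ENNReal.ofReal ((volume S).toReal - Real.pi * t) ≤ volume {x ∈ S | t < f x}) :
    (volume S).toReal * c - Real.pi * c ^ 2 / 2 ≤ ∫ x in S, f x := by
  set m := (volume S).toReal with hm
  have hmnn : 0 ≤ m := ENNReal.toReal_nonneg
  have h0 : 0 ≤ᵐ[volume.restrict S] f := (ae_restrict_iff' hS).mpr (ae_of_all _ hnn)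
  have key := lintegral_eq_lintegral_meas_lt (volume.restrict S) h0 hfm.aemeasurable
  have hintc : IntegrableOn (fun t : ℝ => m - Real.pi * t) (Set.Ioc 0 c) := by
    apply Continuous.integrableOn_Ioc
    continuity
  have hval : ∫ t in Set.Ioc (0:ℝ) c, (m - Real.pi * t) = m * c - Real.pi * c ^ 2 / 2 := by
    rw [← intervalIntegral.integral_of_le hc]
    rw [intervalIntegral.integral_sub intervalIntegrable_const
      (intervalIntegral.intervalIntegrable_id.const_mul Real.pi)]
    rw [intervalIntegral.integral_const, intervalIntegral.integral_const_mul,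
      integral_id]
    simp
    ring
  have hnnIoc : 0 ≤ᵐ[volume.restrict (Set.Ioc (0:ℝ) c)] fun t => m - Real.pi * t := by
    refine (ae_restrict_iff' measurableSet_Ioc).mpr (ae_of_all _ fun t ht => ?_)
    have : Real.pi * t ≤ Real.pi * c := mul_le_mul_of_nonneg_left ht.2 Real.pi_nonneg
    simp only [Pi.zero_apply]
    linarith
  have chain : ENNReal.ofReal (m * c - Real.pi * c ^ 2 / 2) ≤
      ∫⁻ x in S, ENNReal.ofReal (f x) := by
    rw [key]
    calc ENNReal.ofReal (m * c - Real.pi * c ^ 2 / 2)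
        = ∫⁻ t in Set.Ioc (0:ℝ) c, ENNReal.ofReal (m - Real.pi * t) := by
          rw [← hval, ofReal_integral_eq_lintegral_ofReal hintc hnnIoc]
      _ ≤ ∫⁻ t in Set.Ioc (0:ℝ) c, (volume.restrict S) {a | t < f a} := by
          refine setLIntegral_mono ?_ fun t ht => ?_
          · exact Antitone.measurable (fun a b hab => measure_mono
              (fun x hx => lt_of_le_of_lt hab hx))
          · rw [Measure.restrict_apply (measurableSet_lt measurable_const hfm)]
            refine (hmeas t ht).trans (le_of_eq ?_)
            congr 1
            ext x; simp [Set.mem_setOf_eq, and_comm]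
      _ ≤ ∫⁻ t in Set.Ioi (0:ℝ), (volume.restrict S) {a | t < f a} :=
          lintegral_mono_set Set.Ioc_subset_Ioi_self
  have hlt : ∫⁻ x in S, ENNReal.ofReal (f x) < ⊤ := hfi.lintegral_lt_top
  have := ENNReal.toReal_mono hlt.ne chain
  rw [ENNReal.toReal_ofReal (by nlinarith [Real.pi_nonneg])] at this
  rwa [integral_eq_lintegral_of_nonneg_ae h0 hfi.aestronglyMeasurable]


set_option maxHeartbeats 1000000 in
/-- for a set `A` of finite measure, with `A* = B_s` the
origin-centered disk of the same measure,
`J(1_A) - J(1_{A*}) ≥ (1/(4π)) |A △ A*|²`. -/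
theorem set_rearrangement_estimate
    (A : Set E2) (hA : MeasurableSet A) (hfin : volume A < ⊤)
    (hint : IntegrableOn (fun x : E2 => ‖x‖ ^ 2) A)
    (s : ℝ) (hs : s = Real.sqrt ((volume A).toReal / Real.pi)) :
    1 / (4 * Real.pi) *
        ((volume (symmDiff A (Metric.ball (0 : E2) s))).toReal) ^ 2 ≤
      (∫ x in A, ‖x‖ ^ 2) - ∫ x in Metric.ball (0 : E2) s, ‖x‖ ^ 2 := by
  have hπ : (0:ℝ) < Real.pi := Real.pi_pos
  set B := Metric.ball (0 : E2) s with hB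
  have hs0 : 0 ≤ s := hs ▸ Real.sqrt_nonneg _
  have hsq : Real.pi * s ^ 2 = (volume A).toReal := by
    rw [hs, Real.sq_sqrt (by positivity)]
    field_simp
  have hBm : MeasurableSet B := measurableSet_ball
  have hvolB : volume B = volume A := by
    rw [hB, vol_ball2 s hs0, hsq, ENNReal.ofReal_toReal hfin.ne]
  have hBfin : volume B < ⊤ := hvolB ▸ hfin
  have hABfin : volume (A \ B) < ⊤ := (measure_mono Set.diff_subset).trans_lt hfin
  have hBAfin : volume (B \ A) < ⊤ := (measure_mono Set.diff_subset).trans_lt hBfin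
  have hdiff : volume (A \ B) = volume (B \ A) := by
    have h1 : volume (A ∩ B) + volume (A \ B) = volume A := measure_inter_add_diff A hBm
    have h2 : volume (B ∩ A) + volume (B \ A) = volume B := measure_inter_add_diff B hA
    rw [Set.inter_comm] at h2
    rw [← hvolB, ← h2] at h1
    exact (ENNReal.add_right_inj ((measure_mono Set.inter_subset_left).trans_lt hfin).ne).mp h1
  set m := (volume (A \ B)).toReal with hmdef
  have hm0 : 0 ≤ m := ENNReal.toReal_nonneg
  have hmBA : (volume (B \ A)).toReal = m := by rw [hmdef, hdiff]
  have hvolBtoReal : (volume B).toReal = Real.pi * s ^ 2 := by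
    rw [hB, vol_ball2 s hs0, ENNReal.toReal_ofReal (by positivity)]
  have hmle : m ≤ Real.pi * s ^ 2 := by
    rw [← hmBA, ← hvolBtoReal]
    exact ENNReal.toReal_mono hBfin.ne (measure_mono Set.diff_subset)
  set c := m / Real.pi with hcdef
  have hc0 : 0 ≤ c := div_nonneg hm0 hπ.le
  have hπc : Real.pi * c = m := by
    rw [hcdef]; field_simp
  -- symmDiff measure
  have hsymm : (volume (symmDiff A B)).toReal = 2 * m := by
    rw [Set.symmDiff_def, measure_union disjoint_sdiff_sdiff (hBm.diff hA),
      ENNReal.toReal_add hABfin.ne hBAfin.ne, hmBA]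
    ring
  -- integrabilities
  have hI1 : IntegrableOn (fun x : E2 => ‖x‖ ^ 2) (A \ B) := hint.mono_set Set.diff_subset
  have hIB : IntegrableOn (fun x : E2 => ‖x‖ ^ 2) B := by
    have : IntegrableOn (fun x : E2 => ‖x‖ ^ 2) (Metric.closedBall 0 s) :=
      (continuous_norm.pow 2).continuousOn.integrableOn_compact (isCompact_closedBall _ _)
    exact this.mono_set Metric.ball_subset_closedBall
  have hI2 : IntegrableOn (fun x : E2 => ‖x‖ ^ 2) (B \ A) := hIB.mono_set Set.diff_subset
  -- outer bound
  have houter : m * c - Real.pi * c ^ 2 / 2 ≤ ∫ x in A \ B, (‖x‖ ^ 2 - s ^ 2) := by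
    refine layer_bound (A \ B) (hA.diff hBm) _
      ((continuous_norm.pow 2).sub continuous_const).measurable
      (hI1.sub (integrableOn_const hABfin.ne))
      (fun x hx => ?_) c hc0 (by exact hπc.le) (fun t ht => ?_)
    · have : s ≤ ‖x‖ := by
        have := hx.2
        simp only [hB, Metric.mem_ball, dist_zero_right, not_lt] at this
        exact this
      show (0:ℝ) ≤ ‖x‖ ^ 2 - s ^ 2
      nlinarith
    · set r := Real.sqrt (s ^ 2 + t) with hrdef
      have ht0 : 0 < t := ht.1
      have hr0 : 0 ≤ r := Real.sqrt_nonneg _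
      have hr2 : r ^ 2 = s ^ 2 + t := Real.sq_sqrt (by positivity)
      have hrs : s ≤ r := by nlinarith [hr2, ht0.le, hs0, hr0]
      have hsub : volume (Metric.closedBall (0:E2) r \ B) = ENNReal.ofReal (Real.pi * t) := by
        rw [measure_diff ((Metric.ball_subset_ball hrs).trans Metric.ball_subset_closedBall)
          hBm.nullMeasurableSet hBfin.ne, vol_closedBall2 r hr0, vol_ball2 s hs0,
          ← ENNReal.ofReal_sub _ (by positivity)]
        congr 1
        rw [hr2]; ring
      calc ENNReal.ofReal (m - Real.pi * t)
          = ENNReal.ofReal m - ENNReal.ofReal (Real.pi * t) :=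
            ENNReal.ofReal_sub _ (by positivity)
        _ ≤ volume (A \ B) - volume (Metric.closedBall (0:E2) r \ B) := by
            rw [hsub, hmdef, ENNReal.ofReal_toReal hABfin.ne]
        _ ≤ volume ((A \ B) \ (Metric.closedBall (0:E2) r \ B)) := le_measure_diff
        _ ≤ volume {x ∈ A \ B | t < ‖x‖ ^ 2 - s ^ 2} := by
            refine measure_mono fun x hx => ?_
            have hx1 := hx.1
            have hxB : x ∉ B := hx1.2
            have hxr : ¬ (x ∈ Metric.closedBall (0:E2) r) := fun hmem => hx.2 ⟨hmem, hxB⟩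
            simp only [Metric.mem_closedBall, dist_zero_right, not_le] at hxr
            refine ⟨hx1, ?_⟩
            have : r ^ 2 < ‖x‖ ^ 2 := by nlinarith
            linarith [hr2 ▸ this]
  -- inner bound
  have hinner : m * c - Real.pi * c ^ 2 / 2 ≤ ∫ x in B \ A, (s ^ 2 - ‖x‖ ^ 2) := by
    rw [← hmBA]
    refine layer_bound (B \ A) (hBm.diff hA) _
      (continuous_const.sub (continuous_norm.pow 2)).measurable
      ((integrableOn_const hBAfin.ne).sub hI2)
      (fun x hx => ?_) c hc0 (by rw [hmBA]; exact hπc.le) (fun t ht => ?_)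
    · have : ‖x‖ < s := by
        have := hx.1
        simpa only [hB, Metric.mem_ball, dist_zero_right] using this
      show (0:ℝ) ≤ s ^ 2 - ‖x‖ ^ 2
      nlinarith [norm_nonneg x, this]
    · have ht0 : 0 < t := ht.1
      have hts : t ≤ s ^ 2 := by
        have : Real.pi * t ≤ Real.pi * c := mul_le_mul_of_nonneg_left ht.2 hπ.le
        rw [hπc] at this
        nlinarith
      set r := Real.sqrt (s ^ 2 - t) with hrdef
      have hr0 : 0 ≤ r := Real.sqrt_nonneg _
      have hr2 : r ^ 2 = s ^ 2 - t := Real.sq_sqrt (by linarith)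
      have hrs : r ≤ s := by nlinarith [hr2, ht0.le, hs0, hr0]
      have hsub : volume (B \ Metric.ball (0:E2) r) = ENNReal.ofReal (Real.pi * t) := by
        rw [measure_diff (Metric.ball_subset_ball hrs) measurableSet_ball.nullMeasurableSet
          (measure_ball_lt_top).ne, vol_ball2 s hs0, vol_ball2 r hr0,
          ← ENNReal.ofReal_sub _ (by positivity)]
        congr 1
        rw [hr2]; ring
      calc ENNReal.ofReal ((volume (B \ A)).toReal - Real.pi * t)
          = ENNReal.ofReal (volume (B \ A)).toReal - ENNReal.ofReal (Real.pi * t) :=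
            ENNReal.ofReal_sub _ (by positivity)
        _ ≤ volume (B \ A) - volume (B \ Metric.ball (0:E2) r) := by
            rw [hsub, ENNReal.ofReal_toReal hBAfin.ne]
        _ ≤ volume ((B \ A) \ (B \ Metric.ball (0:E2) r)) := le_measure_diff
        _ ≤ volume {x ∈ B \ A | t < s ^ 2 - ‖x‖ ^ 2} := by
            refine measure_mono fun x hx => ?_
            have hx1 := hx.1
            have hxB : x ∈ B := hx1.1
            have hxr : x ∈ Metric.ball (0:E2) r := by
              by_contra hcon
              exact hx.2 ⟨hxB, hcon⟩
            simp only [Metric.mem_ball, dist_zero_right] at hxr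
            refine ⟨hx1, ?_⟩
            have : ‖x‖ ^ 2 < r ^ 2 := by nlinarith [norm_nonneg x]
            linarith [hr2 ▸ this]
  -- decomposition
  have hconst1 : ∫ x in A \ B, (s:ℝ) ^ 2 = m * s ^ 2 := by
    rw [setIntegral_const, smul_eq_mul, measureReal_def, ← hmdef]
  have hconst2 : ∫ x in B \ A, (s:ℝ) ^ 2 = m * s ^ 2 := by
    rw [setIntegral_const, smul_eq_mul, measureReal_def, hmBA]
  have hf1 : ∫ x in A \ B, (‖x‖ ^ 2 - s ^ 2) = (∫ x in A \ B, ‖x‖ ^ 2) - m * s ^ 2 := by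
    rw [integral_sub hI1 (integrableOn_const hABfin.ne), hconst1]
  have hf2 : ∫ x in B \ A, (s ^ 2 - ‖x‖ ^ 2) = m * s ^ 2 - ∫ x in B \ A, ‖x‖ ^ 2 := by
    rw [integral_sub (integrableOn_const (C := s ^ 2) hBAfin.ne) hI2, hconst2]
  have hsplitA : ∫ x in A, ‖x‖ ^ 2 = (∫ x in A \ B, ‖x‖ ^ 2) + ∫ x in A ∩ B, ‖x‖ ^ 2 := by
    have hdisj : Disjoint (A \ B) (A ∩ B) :=
      Set.disjoint_of_subset_right Set.inter_subset_right Set.disjoint_sdiff_left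
    have := setIntegral_union hdisj (hA.inter hBm) hI1 (hint.mono_set Set.inter_subset_left)
    rw [Set.diff_union_inter] at this
    exact this
  have hsplitB : ∫ x in B, ‖x‖ ^ 2 = (∫ x in B \ A, ‖x‖ ^ 2) + ∫ x in A ∩ B, ‖x‖ ^ 2 := by
    have hdisj : Disjoint (B \ A) (B ∩ A) :=
      Set.disjoint_of_subset_right Set.inter_subset_right Set.disjoint_sdiff_left
    have := setIntegral_union hdisj (hBm.inter hA) hI2 (hIB.mono_set Set.inter_subset_left)
    rw [Set.diff_union_inter, Set.inter_comm B A] at this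
    exact this
  rw [hsymm]
  have hkey : 1 / (4 * Real.pi) * (2 * m) ^ 2 = 2 * (m * c - Real.pi * c ^ 2 / 2) := by
    rw [hcdef]
    field_simp
    ring
  rw [hkey, hsplitA, hsplitB]
  have := hf1 ▸ houter
  have := hf2 ▸ hinner
  linarith
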